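/- Let Φ₁, Φ₂ be doubling Young functions such that ∫^∞ dt/Φᵢ(t) < ∞ for i = 1, 2. Then there exists a doubling Young function Φ with Φ(t) ≤ min{Φ₁(t), Φ₂(t)} for all t, ∫^∞ dt/Φ(t) < ∞, and moreover there exists c > 0 such that Φ(t) ≥ c·min{Φ₁(t), Φ₂(t)} for all sufficiently large t. -/

import Mathlib

open Set MeasureTheory

noncomputable section

/-- A Young function: convex, increasing on `[0,∞)`, vanishing at `0`. -/
def IsYoung (Φ : ℝ → ℝ) : Prop :=
  ConvexOn ℝ (Ici 0) Φ ∧ MonotoneOn Φ (Ici 0) ∧ Φ 0 = 0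

/-- A doubling (Δ₂) function: `Φ(2t) ≤ C Φ(t)` for all sufficiently large `t`. -/
def Doubling (Φ : ℝ → ℝ) : Prop :=
  ∃ C : ℝ, ∃ t₀ : ℝ, ∀ t ≥ t₀, Φ (2 * t) ≤ C * Φ t

lemma young_nonneg {Φ : ℝ → ℝ} (h : IsYoung Φ) {t : ℝ} (ht : 0 ≤ t) : 0 ≤ Φ t := by
  have := h.2.1 (self_mem_Ici (a := (0:ℝ))) ht ht
  rw [h.2.2] at this; exact this

lemma young_scale {Φ : ℝ → ℝ} (h : IsYoung Φ) {s t : ℝ} (hs : 0 < s) (hst : s ≤ t) :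
    Φ s ≤ (s / t) * Φ t := by
  have ht : 0 < t := hs.trans_le hst
  have h1 : (0:ℝ) ≤ s / t := by positivity
  have h2 : (0:ℝ) ≤ 1 - s / t := by
    have : s / t ≤ 1 := (div_le_one ht).mpr hst
    linarith
  have key := h.1.2 (x := t) (y := 0) (Set.mem_Ici.mpr ht.le) (Set.mem_Ici.mpr le_rfl) h1 h2 (by ring)
  simp only [smul_eq_mul] at key
  rw [mul_zero, add_zero, div_mul_cancel₀ s ht.ne', h.2.2, mul_zero, add_zero] at key
  exact key

/-- Given two doubling Young functions `Φ₁, Φ₂` with `∫^∞ dt/Φᵢ(t) < ∞`, there is a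
doubling Young function `Φ ≤ min{Φ₁, Φ₂}` with `∫^∞ dt/Φ(t) < ∞` and
`Φ(t) ≥ c·min{Φ₁(t), Φ₂(t)}` for all sufficiently large `t`. -/
theorem doubling_young_min
    (Φ₁ Φ₂ : ℝ → ℝ) (h₁ : IsYoung Φ₁) (h₂ : IsYoung Φ₂)
    (hd₁ : Doubling Φ₁) (hd₂ : Doubling Φ₂)
    (hi₁ : ∃ a : ℝ, IntegrableOn (fun t => 1 / Φ₁ t) (Ioi a))
    (hi₂ : ∃ a : ℝ, IntegrableOn (fun t => 1 / Φ₂ t) (Ioi a)) :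
    ∃ Φ : ℝ → ℝ, IsYoung Φ ∧ Doubling Φ ∧
      (∀ t, 0 ≤ t → Φ t ≤ min (Φ₁ t) (Φ₂ t)) ∧
      (∃ a : ℝ, IntegrableOn (fun t => 1 / Φ t) (Ioi a)) ∧
      ∃ c : ℝ, 0 < c ∧ ∃ t₀ : ℝ, ∀ t ≥ t₀, c * min (Φ₁ t) (Φ₂ t) ≤ Φ t := by
  obtain ⟨C₁, t₁, hC₁⟩ := hd₁
  obtain ⟨C₂, t₂, hC₂⟩ := hd₂
  obtain ⟨a₁, ha₁⟩ := hi₁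
  obtain ⟨a₂, ha₂⟩ := hi₂
  set m : ℝ → ℝ := fun t => min (Φ₁ t) (Φ₂ t) with hm_def
  set ψ : ℝ → ℝ := fun s => if s ≤ 0 then 0 else m s / s with hψ_def
  set Φ : ℝ → ℝ := fun t => ∫ s in (0:ℝ)..t, ψ s with hΦ_def
  have hm0 : ∀ t, 0 ≤ t → 0 ≤ m t := fun t ht =>
    le_min (young_nonneg h₁ ht) (young_nonneg h₂ ht)
  have hmzero : m 0 = 0 := by simp [hm_def, h₁.2.2, h₂.2.2]
  have hmmono : MonotoneOn m (Ici 0) := fun s hs t ht hst =>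
    min_le_min (h₁.2.1 hs ht hst) (h₂.2.1 hs ht hst)
  -- slope monotonicity of m
  have hmslope : ∀ {s t : ℝ}, 0 < s → s ≤ t → m s / s ≤ m t / t := by
    intro s t hs hst
    have ht : 0 < t := hs.trans_le hst
    have hmin : m s ≤ (s / t) * m t := by
      rcases le_total (Φ₁ t) (Φ₂ t) with h | h
      · calc m s ≤ Φ₁ s := min_le_left _ _
          _ ≤ (s / t) * Φ₁ t := young_scale h₁ hs hst
          _ = (s / t) * m t := by rw [hm_def]; simp [min_eq_left h]
      · calc m s ≤ Φ₂ s := min_le_right _ _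
          _ ≤ (s / t) * Φ₂ t := young_scale h₂ hs hst
          _ = (s / t) * m t := by rw [hm_def]; simp [min_eq_right h]
    rw [div_le_div_iff₀ hs ht]
    have : (s / t) * m t * t = m t * s := by field_simp
    calc m s * t ≤ (s / t) * m t * t :=
          mul_le_mul_of_nonneg_right hmin ht.le
      _ = m t * s := this
  have hψnn : ∀ s, 0 ≤ ψ s := by
    intro s
    by_cases hs : s ≤ 0
    · simp [hψ_def, hs]
    · push_neg at hs
      simp only [hψ_def, if_neg (not_le.mpr hs)]
      exact div_nonneg (hm0 s hs.le) hs.le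
  have hψmono : Monotone ψ := by
    intro s t hst
    by_cases ht : t ≤ 0
    · have hs : s ≤ 0 := hst.trans ht
      simp [hψ_def, hs, ht]
    · push_neg at ht
      by_cases hs : s ≤ 0
      · simp only [hψ_def, if_pos hs, if_neg (not_le.mpr ht)]
        exact div_nonneg (hm0 t ht.le) ht.le
      · push_neg at hs
        simp only [hψ_def, if_neg (not_le.mpr hs), if_neg (not_le.mpr ht)]
        exact hmslope hs hst
  have hψint : ∀ a b : ℝ, IntervalIntegrable ψ volume a b := fun a b =>
    hψmono.intervalIntegrable
  -- additivity
  have hΦadd : ∀ a b : ℝ, Φ b - Φ a = ∫ s in a..b, ψ s := by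
    intro a b
    have := intervalIntegral.integral_add_adjacent_intervals (hψint 0 a) (hψint a b)
    simp only [hΦ_def]
    linarith [this]
  -- integral bounds
  have hlb : ∀ s t : ℝ, s ≤ t → (t - s) * ψ s ≤ ∫ u in s..t, ψ u := by
    intro s t hst
    have := intervalIntegral.integral_mono_on hst
      (intervalIntegrable_const (c := ψ s)) (hψint s t)
      (fun x hx => hψmono hx.1)
    simpa [smul_eq_mul, mul_comm] using this
  have hub : ∀ s t : ℝ, s ≤ t → (∫ u in s..t, ψ u) ≤ (t - s) * ψ t := by
    intro s t hst
    have := intervalIntegral.integral_mono_on hst (hψint s t)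
      (intervalIntegrable_const (c := ψ t))
      (fun x hx => hψmono hx.2)
    simpa [smul_eq_mul, mul_comm] using this
  have hΦ0 : Φ 0 = 0 := by simp [hΦ_def]
  have hΦmono : Monotone Φ := by
    intro s t hst
    have h1 := hlb s t hst
    have h2 : 0 ≤ (t - s) * ψ s := mul_nonneg (by linarith) (hψnn s)
    have := hΦadd s t
    linarith
  have hΦnn : ∀ t, 0 ≤ Φ t → True := fun _ _ => trivial
  have hΦnonneg : ∀ t, 0 ≤ t → 0 ≤ Φ t := by
    intro t ht
    have := hΦmono ht
    rwa [hΦ0] at this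
  -- upper bound : Φ t ≤ m t on Ici 0
  have hΦle : ∀ t, 0 ≤ t → Φ t ≤ m t := by
    intro t ht
    rcases eq_or_lt_of_le ht with h | h
    · rw [← h, hΦ0]; exact hm0 0 le_rfl
    · have h1 : Φ t - Φ 0 = ∫ u in (0:ℝ)..t, ψ u := hΦadd 0 t
      have h2 := hub 0 t ht
      have hψt : ψ t = m t / t := by simp [hψ_def, not_le.mpr h]
      have : (t - 0) * ψ t = m t := by
        rw [hψt]; field_simp; ring
      rw [hΦ0] at h1; linarith [h2, this ▸ h2]
  -- lower bound : m t ≤ Φ (2*t) for t ≥ 0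
  have hΦge : ∀ t, 0 ≤ t → m t ≤ Φ (2 * t) := by
    intro t ht
    rcases eq_or_lt_of_le ht with h | h
    · rw [← h, mul_zero, hΦ0, hmzero]
    · have h1 : Φ (2 * t) - Φ t = ∫ u in t..(2*t), ψ u := hΦadd t (2 * t)
      have h2 := hlb t (2 * t) (by linarith)
      have hψt : ψ t = m t / t := by simp [hψ_def, not_le.mpr h]
      have h3 : (2 * t - t) * ψ t = m t := by
        rw [hψt]; field_simp; ring
      have h4 := hΦnonneg t ht
      linarith [h3 ▸ h2]
  -- convexity
  have hΦconvex : ConvexOn ℝ (Ici 0) Φ := by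
    rw [convexOn_iff_slope_mono_adjacent]
    refine ⟨convex_Ici 0, ?_⟩
    intro x y z _ _ hxy hyz
    have e1 : Φ y - Φ x = ∫ u in x..y, ψ u := hΦadd x y
    have e2 : Φ z - Φ y = ∫ u in y..z, ψ u := hΦadd y z
    have b1 : Φ y - Φ x ≤ (y - x) * ψ y := e1 ▸ hub x y hxy.le
    have b2 : (z - y) * ψ y ≤ Φ z - Φ y := e2 ▸ hlb y z hyz.le
    rw [div_le_div_iff₀ (by linarith) (by linarith)]
    calc (Φ y - Φ x) * (z - y) ≤ (y - x) * ψ y * (z - y) :=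
          mul_le_mul_of_nonneg_right b1 (by linarith)
      _ = (z - y) * ψ y * (y - x) := by ring
      _ ≤ (Φ z - Φ y) * (y - x) := mul_le_mul_of_nonneg_right b2 (by linarith)
  -- doubling of m
  set C : ℝ := max 1 (max C₁ C₂) with hC_def
  have hC1 : (1:ℝ) ≤ C := le_max_left _ _
  have hCpos : (0:ℝ) < C := lt_of_lt_of_le one_pos hC1
  set T₀ : ℝ := max 0 (max t₁ t₂) with hT_def
  have hT0 : (0:ℝ) ≤ T₀ := le_max_left _ _
  have hmdbl : ∀ t ≥ T₀, m (2 * t) ≤ C * m t := by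
    intro t ht
    have ht0 : 0 ≤ t := le_trans hT0 ht
    have hA : Φ₁ (2 * t) ≤ C * Φ₁ t :=
      le_trans (hC₁ t (le_trans (le_trans (le_max_left t₁ t₂) (le_max_right 0 _)) ht))
        (mul_le_mul_of_nonneg_right (le_trans (le_max_left C₁ C₂) (le_max_right 1 _))
          (young_nonneg h₁ ht0))
    have hB : Φ₂ (2 * t) ≤ C * Φ₂ t :=
      le_trans (hC₂ t (le_trans (le_trans (le_max_right t₁ t₂) (le_max_right 0 _)) ht))
        (mul_le_mul_of_nonneg_right (le_trans (le_max_right C₁ C₂) (le_max_right 1 _))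
          (young_nonneg h₂ ht0))
    rcases le_total (Φ₁ t) (Φ₂ t) with h | h
    · calc m (2*t) ≤ Φ₁ (2*t) := min_le_left _ _
        _ ≤ C * Φ₁ t := hA
        _ = C * m t := by rw [hm_def]; simp [min_eq_left h]
    · calc m (2*t) ≤ Φ₂ (2*t) := min_le_right _ _
        _ ≤ C * Φ₂ t := hB
        _ = C * m t := by rw [hm_def]; simp [min_eq_right h]
  -- key : for t ≥ 2*T₀, m t ≤ C * Φ t
  have hkey : ∀ t ≥ 2 * T₀, m t ≤ C * Φ t := by
    intro t ht
    have ht2 : t / 2 ≥ T₀ := by linarith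
    have h1 : m t ≤ C * m (t / 2) := by
      have := hmdbl (t / 2) ht2
      rwa [show 2 * (t / 2) = t by ring] at this
    have h2 : m (t / 2) ≤ Φ t := by
      have := hΦge (t / 2) (by linarith)
      rwa [show 2 * (t / 2) = t by ring] at this
    calc m t ≤ C * m (t/2) := h1
      _ ≤ C * Φ t := mul_le_mul_of_nonneg_left h2 hCpos.le
  have hΦdbl : Doubling Φ := by
    refine ⟨C * C, 2 * T₀, fun t ht => ?_⟩
    have ht0 : 0 ≤ t := le_trans (by linarith) ht
    calc Φ (2 * t) ≤ m (2 * t) := hΦle (2 * t) (by linarith)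
      _ ≤ C * m t := hmdbl t (by linarith)
      _ ≤ C * (C * Φ t) := mul_le_mul_of_nonneg_left (hkey t ht) hCpos.le
      _ = C * C * Φ t := by ring
  -- integrability
  have hΦmeas : Measurable Φ := hΦmono.measurable
  have hint : ∃ a : ℝ, IntegrableOn (fun t => 1 / Φ t) (Ioi a) := by
    by_cases hz : ∀ s, 0 ≤ s → m s = 0
    · refine ⟨0, ?_⟩
      have hψz : ψ = fun _ => 0 := by
        funext s
        by_cases hs : s ≤ 0
        · simp [hψ_def, hs]
        · push_neg at hs
          simp [hψ_def, not_le.mpr hs, hz s hs.le]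
      have hΦz : ∀ t, Φ t = 0 := by intro t; simp [hΦ_def, hψz]
      have : (fun t => 1 / Φ t) = fun _ => (0:ℝ) := by
        funext t; rw [hΦz t]; simp
      rw [this]
      exact (integrableOn_const_iff (C := (0:ℝ))).mpr (Or.inl enorm_zero)
    · push_neg at hz
      obtain ⟨s₀, hs₀0, hs₀⟩ := hz
      have hs₀pos : 0 < m s₀ := lt_of_le_of_ne (hm0 s₀ hs₀0) (Ne.symm hs₀)
      set A : ℝ := max (2 * a₁) (max (2 * a₂) (max (2 * s₀) 0)) with hA_def
      have hA1 : 2 * a₁ ≤ A := le_max_left _ _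
      have hA2 : 2 * a₂ ≤ A := le_trans (le_max_left _ _) (le_max_right _ _)
      have hAs : 2 * s₀ ≤ A :=
        le_trans (le_max_left _ _) (le_trans (le_max_right _ _) (le_max_right _ _))
      have hA0 : (0:ℝ) ≤ A :=
        le_trans (le_max_right _ _) (le_trans (le_max_right _ _) (le_max_right _ _))
      refine ⟨A, ?_⟩
      -- dominating function
      have hg1 : IntegrableOn (fun s => 1 / Φ₁ ((1/2) * s)) (Ioi (2 * a₁)) := by
        rw [integrableOn_Ioi_comp_mul_left_iff (fun t => 1 / Φ₁ t) (2 * a₁)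
          (by norm_num : (0:ℝ) < 1/2)]
        rw [show (1/2 : ℝ) * (2 * a₁) = a₁ by ring]
        exact ha₁
      have hg2 : IntegrableOn (fun s => 1 / Φ₂ ((1/2) * s)) (Ioi (2 * a₂)) := by
        rw [integrableOn_Ioi_comp_mul_left_iff (fun t => 1 / Φ₂ t) (2 * a₂)
          (by norm_num : (0:ℝ) < 1/2)]
        rw [show (1/2 : ℝ) * (2 * a₂) = a₂ by ring]
        exact ha₂
      have hg : IntegrableOn (fun s => 1 / Φ₁ ((1/2) * s) + 1 / Φ₂ ((1/2) * s)) (Ioi A) :=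
        ((hg1.mono_set (Ioi_subset_Ioi hA1)).add
          (hg2.mono_set (Ioi_subset_Ioi hA2)))
      refine Integrable.mono' hg ?_ ?_
      · exact ((measurable_const.div hΦmeas).aestronglyMeasurable).restrict
      · rw [ae_restrict_iff' measurableSet_Ioi]
        refine Filter.Eventually.of_forall (fun s hs => ?_)
        have hsA : A < s := hs
        have hs0 : 0 < s := lt_of_le_of_lt hA0 hsA
        have hs2 : s₀ ≤ s / 2 := by linarith [hAs]
        have hms2 : 0 < m (s / 2) :=
          lt_of_lt_of_le hs₀pos (hmmono hs₀0 (by linarith : (0:ℝ) ≤ s / 2) hs2)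
        have hΦs : 0 < Φ s := by
          have := hΦge (s / 2) (by linarith)
          rw [show 2 * (s / 2) = s by ring] at this
          linarith
        have h1pos : 0 < Φ₁ (s / 2) := lt_of_lt_of_le hms2 (min_le_left _ _)
        have h2pos : 0 < Φ₂ (s / 2) := lt_of_lt_of_le hms2 (min_le_right _ _)
        have hbound : 1 / Φ s ≤ 1 / m (s / 2) := by
          apply one_div_le_one_div_of_le hms2
          have := hΦge (s / 2) (by linarith)
          rwa [show 2 * (s / 2) = s by ring] at this
        have hmin : 1 / m (s / 2) ≤ 1 / Φ₁ (s / 2) + 1 / Φ₂ (s / 2) := by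
          rcases le_total (Φ₁ (s/2)) (Φ₂ (s/2)) with h | h
          · rw [hm_def]; simp only [min_eq_left h]
            have : (0:ℝ) ≤ 1 / Φ₂ (s/2) := by positivity
            linarith
          · rw [hm_def]; simp only [min_eq_right h]
            have : (0:ℝ) ≤ 1 / Φ₁ (s/2) := by positivity
            linarith
        have heq : (1:ℝ)/2 * s = s / 2 := by ring
        rw [Real.norm_eq_abs, abs_of_nonneg (by positivity : (0:ℝ) ≤ 1 / Φ s), heq]
        linarith
  refine ⟨Φ, ⟨hΦconvex, hΦmono.monotoneOn _, hΦ0⟩, hΦdbl, hΦle, hint,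
    1 / C, by positivity, 2 * T₀, fun t ht => ?_⟩
  have hmt := hkey t ht
  have h2 : 1 / C * m t ≤ 1 / C * (C * Φ t) :=
    mul_le_mul_of_nonneg_left hmt (by positivity)
  have h3 : 1 / C * (C * Φ t) = Φ t := by field_simp
  linarith
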